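/- For the bit-level distortion δ(0,0)=1, δ(0,1)=3, δ(1,0)=1, δ(1,1)=0 and a binary source with Pr(x=1) = p, fix λ ∈ (0,1) and define R(λ) = H(p) − H((1+λ)/(1+λ+λ²)) + (p − (1+λ)/(1+λ+λ²))·H(λ/(1+λ)) and D(λ) = (1+2λ+3λ²)/(1+λ+λ²) − p(1+2λ)/(1+λ). Then, whenever R(λ) > 0, the pair (R(λ), D(λ)) lies on the rate-distortion curve, achieved by the test-channel input distribution q(x̂=0) = ((1+λ) − p(1+λ+λ²))/(1−λ²) and q(x̂=1) = (p(1+λ+λ²) − λ(1+λ))/(1−λ²), provided both of these are in [0,1]. -/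

import Mathlib

set_option maxHeartbeats 1000000


/-- Mutual information `I(X;X̂)` for a source `P` on a finite alphabet and a test
channel `Q`. -/
noncomputable def MI {A B : Type} [Fintype A] [Fintype B]
    (P : A → ℝ) (Q : A → B → ℝ) : ℝ :=
  ∑ a, ∑ b, P a * Q a b * Real.log (Q a b / ∑ a', P a' * Q a' b)

/-- Rate-distortion function `R(D) = inf { I(X;X̂) : E[δ(X,X̂)] ≤ D }`. -/
noncomputable def RD {A B : Type} [Fintype A] [Fintype B]
    (P : A → ℝ) (δ : A → B → ℝ) (D : ℝ) : ℝ :=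
  sInf {r | ∃ Q : A → B → ℝ, (∀ a b, 0 ≤ Q a b) ∧ (∀ a, ∑ b, Q a b = 1) ∧
    (∑ a, ∑ b, P a * Q a b * δ a b) ≤ D ∧ r = MI P Q}

/-- The bit-level distortion `δ(0,0)=1, δ(0,1)=3, δ(1,0)=1, δ(1,1)=0`. -/
def bitDist : Fin 2 → Fin 2 → ℝ := ![![1, 3], ![1, 0]]

/-- The binary source with `Pr(x = 1) = p`. -/
noncomputable def srcP (p : ℝ) : Fin 2 → ℝ := ![1 - p, p]

lemma binEntropy_eq' (x : ℝ) :
    Real.binEntropy x = -x * Real.log x - (1 - x) * Real.log (1 - x) := by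
  simp [Real.binEntropy, Real.log_inv]; ring

lemma conv_term (pa q m ν w : ℝ) (hpa : 0 < pa) (hq : 0 ≤ q) (hqm : pa * q ≤ m)
    (hν : 0 < ν) (hw : 0 < w) :
    pa * q * (Real.log w - Real.log ν) + pa * q - pa * m * w / ν ≤
      pa * q * Real.log (q / m) := by
  rcases eq_or_lt_of_le hq with h|h
  · rw [← h]
    have hm : 0 ≤ m := le_trans (by rw [← h]; ring_nf; exact le_refl 0) hqm
    have : 0 ≤ pa * m * w / ν := by positivity
    simp; linarith
  · have hm : 0 < m := lt_of_lt_of_le (by positivity) hqm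
    have key := Real.log_le_sub_one_of_pos (show (0:ℝ) < m * w / (q * ν) by positivity)
    have e : Real.log (m * w / (q * ν)) =
        Real.log m + Real.log w - (Real.log q + Real.log ν) := by
      rw [Real.log_div (by positivity) (by positivity), Real.log_mul hm.ne' hw.ne',
        Real.log_mul h.ne' hν.ne']
    have e2 : Real.log (q / m) = Real.log q - Real.log m := Real.log_div h.ne' hm.ne'
    rw [e] at key
    have h4 := mul_le_mul_of_nonneg_left key (show (0:ℝ) ≤ pa * q by positivity)
    rw [e2]
    have h3 : pa * q * (m * w / (q * ν)) = pa * m * w / ν := by field_simp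
    nlinarith [h4]

lemma mi_term (pa qb ν w : ℝ) (hν : 0 < ν) (hw : 0 < w) (hqb : 0 ≤ qb) :
    pa * (qb * w / ν) * Real.log (qb * w / ν / qb) =
      pa * (qb * w / ν) * (Real.log w - Real.log ν) := by
  rcases eq_or_lt_of_le hqb with h|h
  · rw [← h]; simp
  · have : qb * w / ν / qb = w / ν := by
      rw [div_div, mul_comm ν qb, ← div_div, mul_div_assoc]
      rw [mul_comm qb (w / qb), div_mul_cancel₀ _ h.ne']
    rw [this, Real.log_div hw.ne' hν.ne']

/-- for the bit-level distortion and λ ∈ (0,1), let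
`R(λ) = H(p) − H((1+λ)/(1+λ+λ²)) + (p − (1+λ)/(1+λ+λ²))·H(λ/(1+λ))` and
`D(λ) = (1+2λ+3λ²)/(1+λ+λ²) − p(1+2λ)/(1+λ)`. If `R(λ) > 0` and the test-channel
input distribution `q(x̂=0) = ((1+λ) − p(1+λ+λ²))/(1−λ²)`,
`q(x̂=1) = (p(1+λ+λ²) − λ(1+λ))/(1−λ²)` has both entries in `[0,1]`, then
`(R(λ), D(λ))` lies on the rate-distortion curve and is achieved by a test channel
with that reproduction marginal. -/
theorem stmt_14 (p lam : ℝ) (hp0 : 0 < p) (hp1 : p < 1)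
    (hl0 : 0 < lam) (hl1 : lam < 1)
    (hR : 0 < Real.binEntropy p - Real.binEntropy ((1 + lam) / (1 + lam + lam ^ 2))
        + (p - (1 + lam) / (1 + lam + lam ^ 2)) * Real.binEntropy (lam / (1 + lam)))
    (hq0a : 0 ≤ ((1 + lam) - p * (1 + lam + lam ^ 2)) / (1 - lam ^ 2))
    (hq0b : ((1 + lam) - p * (1 + lam + lam ^ 2)) / (1 - lam ^ 2) ≤ 1)
    (hq1a : 0 ≤ (p * (1 + lam + lam ^ 2) - lam * (1 + lam)) / (1 - lam ^ 2))
    (hq1b : (p * (1 + lam + lam ^ 2) - lam * (1 + lam)) / (1 - lam ^ 2) ≤ 1) :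
    RD (srcP p) bitDist
        ((1 + 2 * lam + 3 * lam ^ 2) / (1 + lam + lam ^ 2) - p * (1 + 2 * lam) / (1 + lam))
      = Real.binEntropy p - Real.binEntropy ((1 + lam) / (1 + lam + lam ^ 2))
          + (p - (1 + lam) / (1 + lam + lam ^ 2)) * Real.binEntropy (lam / (1 + lam)) ∧
    ∃ Q : Fin 2 → Fin 2 → ℝ, (∀ a b, 0 ≤ Q a b) ∧ (∀ a, ∑ b, Q a b = 1) ∧
      (∑ a, ∑ b, srcP p a * Q a b * bitDist a b)
          ≤ (1 + 2 * lam + 3 * lam ^ 2) / (1 + lam + lam ^ 2)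
              - p * (1 + 2 * lam) / (1 + lam) ∧
      MI (srcP p) Q
          = Real.binEntropy p - Real.binEntropy ((1 + lam) / (1 + lam + lam ^ 2))
              + (p - (1 + lam) / (1 + lam + lam ^ 2)) * Real.binEntropy (lam / (1 + lam)) ∧
      (∑ a, srcP p a * Q a 0 = ((1 + lam) - p * (1 + lam + lam ^ 2)) / (1 - lam ^ 2)) ∧
      (∑ a, srcP p a * Q a 1 = (p * (1 + lam + lam ^ 2) - lam * (1 + lam)) / (1 - lam ^ 2)) := by
  clear hR hq0b hq1b
  have hS : (0:ℝ) < 1 + lam + lam ^ 2 := by positivity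
  have h1l : (0:ℝ) < 1 + lam := by linarith
  have h1p : (0:ℝ) < 1 - p := by linarith
  have h1l2 : (0:ℝ) < 1 - lam ^ 2 := by nlinarith
  have hν0 : (0:ℝ) < lam * ((1 - p) * (1 + lam + lam ^ 2)) := by positivity
  have hν1 : (0:ℝ) < p * (1 + lam + lam ^ 2) / (1 + lam) := by positivity
  have hLlam : Real.log lam ≤ 0 := Real.log_nonpos hl0.le hl1.le
  -- entropy identity
  have hRid : Real.binEntropy p - Real.binEntropy ((1 + lam) / (1 + lam + lam ^ 2))
        + (p - (1 + lam) / (1 + lam + lam ^ 2)) * Real.binEntropy (lam / (1 + lam))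
      = Real.log lam * ((1 + 2 * lam + 3 * lam ^ 2) / (1 + lam + lam ^ 2)
            - p * (1 + 2 * lam) / (1 + lam))
        - (1 - p) * Real.log (lam * ((1 - p) * (1 + lam + lam ^ 2)))
        - p * Real.log (p * (1 + lam + lam ^ 2) / (1 + lam)) := by
    rw [binEntropy_eq', binEntropy_eq', binEntropy_eq']
    have hx : (1:ℝ) - (1 + lam) / (1 + lam + lam ^ 2) = lam ^ 2 / (1 + lam + lam ^ 2) := by
      field_simp
      ring
    have hy : (1:ℝ) - lam / (1 + lam) = 1 / (1 + lam) := by field_simp; ring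
    rw [hx, hy,
      Real.log_div h1l.ne' hS.ne',
      Real.log_div (by positivity : (lam ^ 2 : ℝ) ≠ 0) hS.ne',
      Real.log_div hl0.ne' h1l.ne',
      Real.log_div one_ne_zero h1l.ne',
      Real.log_mul hl0.ne' (by positivity),
      Real.log_mul h1p.ne' hS.ne',
      Real.log_div (by positivity : (p * (1 + lam + lam ^ 2) : ℝ) ≠ 0) h1l.ne',
      Real.log_mul hp0.ne' hS.ne',
      Real.log_pow, Real.log_one]
    push_cast
    field_simp
    ring
  -- converse
  have conv : ∀ Q : Fin 2 → Fin 2 → ℝ, (∀ a b, 0 ≤ Q a b) → (∀ a, ∑ b, Q a b = 1) →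
      (∑ a, ∑ b, srcP p a * Q a b * bitDist a b)
          ≤ (1 + 2 * lam + 3 * lam ^ 2) / (1 + lam + lam ^ 2)
              - p * (1 + 2 * lam) / (1 + lam) →
      Real.binEntropy p - Real.binEntropy ((1 + lam) / (1 + lam + lam ^ 2))
          + (p - (1 + lam) / (1 + lam + lam ^ 2)) * Real.binEntropy (lam / (1 + lam))
        ≤ MI (srcP p) Q := by
    intro Q hpos hrow hdist
    have hr0 := hrow 0
    have hr1 := hrow 1
    simp only [Fin.sum_univ_two] at hr0 hr1
    simp only [srcP, bitDist, Fin.sum_univ_two, Matrix.cons_val_zero,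
      Matrix.cons_val_one, Matrix.head_cons] at hdist
    simp only [MI, srcP, Fin.sum_univ_two, Matrix.cons_val_zero,
      Matrix.cons_val_one, Matrix.head_cons]
    have h00 := conv_term (1 - p) (Q 0 0) ((1 - p) * Q 0 0 + p * Q 1 0)
      (lam * ((1 - p) * (1 + lam + lam ^ 2))) lam h1p (hpos 0 0)
      (by linarith [mul_nonneg hp0.le (hpos 1 0)]) hν0 hl0
    have h01 := conv_term (1 - p) (Q 0 1) ((1 - p) * Q 0 1 + p * Q 1 1)
      (lam * ((1 - p) * (1 + lam + lam ^ 2))) (lam ^ 3) h1p (hpos 0 1)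
      (by linarith [mul_nonneg hp0.le (hpos 1 1)]) hν0 (by positivity)
    have h10 := conv_term p (Q 1 0) ((1 - p) * Q 0 0 + p * Q 1 0)
      (p * (1 + lam + lam ^ 2) / (1 + lam)) lam hp0 (hpos 1 0)
      (by linarith [mul_nonneg h1p.le (hpos 0 0)]) hν1 hl0
    have h11 := conv_term p (Q 1 1) ((1 - p) * Q 0 1 + p * Q 1 1)
      (p * (1 + lam + lam ^ 2) / (1 + lam)) 1 hp0 (hpos 1 1)
      (by linarith [mul_nonneg h1p.le (hpos 0 1)]) hν1 one_pos
    rw [Real.log_pow] at h01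
    rw [Real.log_one] at h11
    push_cast at h01
    set m0 : ℝ := (1 - p) * Q 0 0 + p * Q 1 0 with hm0def
    set m1 : ℝ := (1 - p) * Q 0 1 + p * Q 1 1 with hm1def
    have hc0 : (1 - p) * m0 * lam / (lam * ((1 - p) * (1 + lam + lam ^ 2)))
        + p * m0 * lam / (p * (1 + lam + lam ^ 2) / (1 + lam)) = m0 := by
      field_simp
      ring
    have hc1 : (1 - p) * m1 * lam ^ 3 / (lam * ((1 - p) * (1 + lam + lam ^ 2)))
        + p * m1 * 1 / (p * (1 + lam + lam ^ 2) / (1 + lam)) = m1 := by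
      field_simp
      ring
    have hm01 : m0 + m1 = 1 := by
      rw [hm0def, hm1def]; linear_combination (1 - p) * hr0 + p * hr1
    have hsum1 : (1 - p) * Q 0 0 + (1 - p) * Q 0 1 + p * Q 1 0 + p * Q 1 1 = 1 := by
      linear_combination (1 - p) * hr0 + p * hr1
    have hlog0 : (1 - p) * Q 0 0 * Real.log (lam * ((1 - p) * (1 + lam + lam ^ 2)))
        + (1 - p) * Q 0 1 * Real.log (lam * ((1 - p) * (1 + lam + lam ^ 2)))
        = (1 - p) * Real.log (lam * ((1 - p) * (1 + lam + lam ^ 2))) := by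
      linear_combination ((1 - p) * Real.log (lam * ((1 - p) * (1 + lam + lam ^ 2)))) * hr0
    have hlog1 : p * Q 1 0 * Real.log (p * (1 + lam + lam ^ 2) / (1 + lam))
        + p * Q 1 1 * Real.log (p * (1 + lam + lam ^ 2) / (1 + lam))
        = p * Real.log (p * (1 + lam + lam ^ 2) / (1 + lam)) := by
      linear_combination (p * Real.log (p * (1 + lam + lam ^ 2) / (1 + lam))) * hr1
    have hE := mul_le_mul_of_nonpos_left hdist hLlam
    rw [hRid]
    linarith [h00, h01, h10, h11, hc0, hc1, hm01, hsum1, hlog0, hlog1, hE]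
  -- explicit channel
  have hSne : (1 + lam + lam ^ 2 : ℝ) ≠ 0 := hS.ne'
  have hlne : lam ≠ 0 := hl0.ne'
  have hpne : p ≠ 0 := hp0.ne'
  have h1pne : (1 - p : ℝ) ≠ 0 := h1p.ne'
  have h1lne : (1 + lam : ℝ) ≠ 0 := h1l.ne'
  have h1l2ne : (1 - lam ^ 2 : ℝ) ≠ 0 := h1l2.ne'
  set Qc : Fin 2 → Fin 2 → ℝ :=
    ![![((1 + lam) - p * (1 + lam + lam ^ 2)) / (1 - lam ^ 2) * lam / (lam * ((1 - p) * (1 + lam + lam ^ 2))), (p * (1 + lam + lam ^ 2) - lam * (1 + lam)) / (1 - lam ^ 2) * lam ^ 3 / (lam * ((1 - p) * (1 + lam + lam ^ 2)))],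
      ![((1 + lam) - p * (1 + lam + lam ^ 2)) / (1 - lam ^ 2) * lam / (p * (1 + lam + lam ^ 2) / (1 + lam)), (p * (1 + lam + lam ^ 2) - lam * (1 + lam)) / (1 - lam ^ 2) * 1 / (p * (1 + lam + lam ^ 2) / (1 + lam))]] with hQc
  have hQpos : ∀ a b, 0 ≤ Qc a b := by
    intro a b
    fin_cases a <;> fin_cases b <;>
      simp only [hQc, Matrix.cons_val_zero, Matrix.cons_val_one, Matrix.head_cons,
        Matrix.cons_val', Matrix.empty_val', Matrix.cons_val_fin_one, Matrix.head_fin_const]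
    · exact div_nonneg (mul_nonneg hq0a hl0.le) hν0.le
    · exact div_nonneg (mul_nonneg hq1a (by positivity)) hν0.le
    · exact div_nonneg (mul_nonneg hq0a hl0.le) hν1.le
    · exact div_nonneg (mul_nonneg hq1a one_pos.le) hν1.le
  have hQrow : ∀ a, ∑ b, Qc a b = 1 := by
    intro a
    fin_cases a <;>
      simp only [hQc, Fin.sum_univ_two, Fin.zero_eta, Fin.mk_one, Matrix.cons_val_zero, Matrix.cons_val_one,
        Matrix.head_cons, Matrix.cons_val', Matrix.empty_val', Matrix.cons_val_fin_one,
        Matrix.head_fin_const] <;>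
      (field_simp; ring)
  have hmarg0 : (1 - p) * (((1 + lam) - p * (1 + lam + lam ^ 2)) / (1 - lam ^ 2) * lam / (lam * ((1 - p) * (1 + lam + lam ^ 2)))) + p * (((1 + lam) - p * (1 + lam + lam ^ 2)) / (1 - lam ^ 2) * lam / (p * (1 + lam + lam ^ 2) / (1 + lam))) = ((1 + lam) - p * (1 + lam + lam ^ 2)) / (1 - lam ^ 2) := by
    field_simp
    ring
  have hmarg1 : (1 - p) * ((p * (1 + lam + lam ^ 2) - lam * (1 + lam)) / (1 - lam ^ 2) * lam ^ 3 / (lam * ((1 - p) * (1 + lam + lam ^ 2)))) + p * ((p * (1 + lam + lam ^ 2) - lam * (1 + lam)) / (1 - lam ^ 2) * 1 / (p * (1 + lam + lam ^ 2) / (1 + lam))) = (p * (1 + lam + lam ^ 2) - lam * (1 + lam)) / (1 - lam ^ 2) := by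
    field_simp
    ring
  have hm0 : ∑ a, srcP p a * Qc a 0 = ((1 + lam) - p * (1 + lam + lam ^ 2)) / (1 - lam ^ 2) := by
    simp only [hQc, srcP, Fin.sum_univ_two, Matrix.cons_val_zero, Matrix.cons_val_one,
      Matrix.head_cons, Matrix.cons_val', Matrix.empty_val', Matrix.cons_val_fin_one,
      Matrix.head_fin_const]
    exact hmarg0
  have hm1 : ∑ a, srcP p a * Qc a 1 = (p * (1 + lam + lam ^ 2) - lam * (1 + lam)) / (1 - lam ^ 2) := by
    simp only [hQc, srcP, Fin.sum_univ_two, Matrix.cons_val_zero, Matrix.cons_val_one,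
      Matrix.head_cons, Matrix.cons_val', Matrix.empty_val', Matrix.cons_val_fin_one,
      Matrix.head_fin_const]
    exact hmarg1
  have hdisteq : (∑ a, ∑ b, srcP p a * Qc a b * bitDist a b)
      = (1 + 2 * lam + 3 * lam ^ 2) / (1 + lam + lam ^ 2) - p * (1 + 2 * lam) / (1 + lam) := by
    simp only [hQc, srcP, bitDist, Fin.sum_univ_two, Matrix.cons_val_zero, Matrix.cons_val_one,
      Matrix.head_cons, Matrix.cons_val', Matrix.empty_val', Matrix.cons_val_fin_one,
      Matrix.head_fin_const]
    field_simp
    ring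
  have hMI : MI (srcP p) Qc
      = Real.binEntropy p - Real.binEntropy ((1 + lam) / (1 + lam + lam ^ 2))
          + (p - (1 + lam) / (1 + lam + lam ^ 2)) * Real.binEntropy (lam / (1 + lam)) := by
    simp only [MI, hQc, srcP, Fin.sum_univ_two, Matrix.cons_val_zero, Matrix.cons_val_one,
      Matrix.head_cons, Matrix.cons_val', Matrix.empty_val', Matrix.cons_val_fin_one,
      Matrix.head_fin_const]
    rw [hmarg0, hmarg1]
    rw [mi_term (1 - p) (((1 + lam) - p * (1 + lam + lam ^ 2)) / (1 - lam ^ 2)) (lam * ((1 - p) * (1 + lam + lam ^ 2))) lam hν0 hl0 hq0a,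
      mi_term (1 - p) ((p * (1 + lam + lam ^ 2) - lam * (1 + lam)) / (1 - lam ^ 2)) (lam * ((1 - p) * (1 + lam + lam ^ 2))) (lam ^ 3) hν0 (by positivity) hq1a,
      mi_term p (((1 + lam) - p * (1 + lam + lam ^ 2)) / (1 - lam ^ 2)) (p * (1 + lam + lam ^ 2) / (1 + lam)) lam hν1 hl0 hq0a,
      mi_term p ((p * (1 + lam + lam ^ 2) - lam * (1 + lam)) / (1 - lam ^ 2)) (p * (1 + lam + lam ^ 2) / (1 + lam)) 1 hν1 one_pos hq1a]
    rw [Real.log_one, Real.log_pow, hRid]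
    push_cast
    field_simp
    ring
  have hdist_le : (∑ a, ∑ b, srcP p a * Qc a b * bitDist a b)
      ≤ (1 + 2 * lam + 3 * lam ^ 2) / (1 + lam + lam ^ 2) - p * (1 + 2 * lam) / (1 + lam) :=
    le_of_eq hdisteq
  constructor
  · simp only [RD]
    apply le_antisymm
    · apply csInf_le
      · exact ⟨_, fun r hr => by
          obtain ⟨Q, hQ1, hQ2, hQ3, rfl⟩ := hr
          exact conv Q hQ1 hQ2 hQ3⟩
      · exact ⟨Qc, hQpos, hQrow, hdist_le, hMI.symm⟩
    · apply le_csInf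
      · exact ⟨_, ⟨Qc, hQpos, hQrow, hdist_le, hMI.symm⟩⟩
      · rintro r ⟨Q, hQ1, hQ2, hQ3, rfl⟩
        exact conv Q hQ1 hQ2 hQ3
  · exact ⟨Qc, hQpos, hQrow, hdist_le, hMI, hm0, hm1⟩
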